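/- Let Z, δZ ∈ ℝ^{n×n} be such that Z + δZ is orthogonal, and set β = 2‖δZ‖·‖Z‖ + ‖δZ‖². If β < 1, then every eigenvalue of ZᵀZ lies in the interval [1 − β, 1 + β]; in particular Z is invertible and its spectral condition number κ(Z) = σ_1(Z)/σ_n(Z) satisfies κ(Z) ≤ √((1 + β)/(1 − β)). -/

import Mathlib

open Matrix

noncomputable def specNorm {m n : ℕ} (A : Matrix (Fin m) (Fin n) ℝ) : ℝ :=
  ‖LinearMap.toContinuousLinearMap (Matrix.toEuclideanLin A)‖

noncomputable def frobNorm {m n : ℕ} (A : Matrix (Fin m) (Fin n) ℝ) : ℝ :=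
  Real.sqrt (∑ p, ∑ q, (A p q) ^ 2)

def offDiag {n : ℕ} (A : Matrix (Fin n) (Fin n) ℝ) : Matrix (Fin n) (Fin n) ℝ :=
  fun p q => if p = q then 0 else A p q

def jacobiRot {n : ℕ} (i j : Fin n) (c s : ℝ) : Matrix (Fin n) (Fin n) ℝ :=
  fun p q =>
    if p = i ∧ q = i then c
    else if p = j ∧ q = j then c
    else if p = i ∧ q = j then s
    else if p = j ∧ q = i then -s
    else if p = q then 1 else 0

open Classical in
noncomputable def eigValsDesc {n : ℕ} (A : Matrix (Fin n) (Fin n) ℝ) : Fin n → ℝ :=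
  if hA : A.IsHermitian then
    fun k => (hA.eigenvalues ∘ Tuple.sort hA.eigenvalues) k.rev
  else 0

noncomputable def singValsDesc {m n : ℕ} (A : Matrix (Fin m) (Fin n) ℝ) : Fin n → ℝ :=
  fun k => Real.sqrt (eigValsDesc (Aᵀ * A) k)

section Helpers

variable {n : ℕ}

lemma specNorm_nonneg' (A : Matrix (Fin n) (Fin n) ℝ) : 0 ≤ specNorm A := norm_nonneg _

lemma specNorm_neg' (A : Matrix (Fin n) (Fin n) ℝ) : specNorm (-A) = specNorm A := by
  unfold specNorm; rw [map_neg, map_neg, norm_neg]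

lemma specNorm_add_le' (A B : Matrix (Fin n) (Fin n) ℝ) :
    specNorm (A + B) ≤ specNorm A + specNorm B := by
  unfold specNorm; rw [map_add, map_add]; exact norm_add_le _ _

lemma specNorm_mul_le' (A B : Matrix (Fin n) (Fin n) ℝ) :
    specNorm (A * B) ≤ specNorm A * specNorm B := by
  unfold specNorm
  have h : Matrix.toEuclideanLin (A * B) =
      (Matrix.toEuclideanLin A).comp (Matrix.toEuclideanLin B) := by
    ext v
    simp [Matrix.toEuclideanLin_apply, Matrix.mulVec_mulVec]
  rw [h]
  have h2 : LinearMap.toContinuousLinearMap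
        ((Matrix.toEuclideanLin A).comp (Matrix.toEuclideanLin B))
      = (LinearMap.toContinuousLinearMap (Matrix.toEuclideanLin A)).comp
        (LinearMap.toContinuousLinearMap (Matrix.toEuclideanLin B)) := by
    ext v; rfl
  rw [h2]
  exact ContinuousLinearMap.opNorm_comp_le _ _

lemma specNorm_transpose' (A : Matrix (Fin n) (Fin n) ℝ) : specNorm Aᵀ = specNorm A := by
  unfold specNorm
  have h : Aᵀ = Aᴴ := by
    ext i j; simp [Matrix.conjTranspose]
  rw [h, Matrix.toEuclideanLin_conjTranspose_eq_adjoint,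
      LinearMap.adjoint_toContinuousLinearMap]
  exact ContinuousLinearMap.adjoint.norm_map _

lemma mulVec_eig_bound' (M : Matrix (Fin n) (Fin n) ℝ) (v : EuclideanSpace ℝ (Fin n))
    (hv : ‖v‖ = 1) (μ : ℝ) (h : M *ᵥ ⇑v = μ • ⇑v) : |μ| ≤ specNorm M := by
  have happ : Matrix.toEuclideanLin M v = μ • v := by
    rw [Matrix.toEuclideanLin_apply]
    have he : (WithLp.equiv 2 (Fin n → ℝ)) v = ⇑v := rfl
    rw [h]; rfl
  have key : ‖(LinearMap.toContinuousLinearMap (Matrix.toEuclideanLin M)) v‖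
      ≤ specNorm M * ‖v‖ := ContinuousLinearMap.le_opNorm _ v
  have hc : (LinearMap.toContinuousLinearMap (Matrix.toEuclideanLin M)) v
      = Matrix.toEuclideanLin M v := rfl
  rw [hc, happ, norm_smul, hv, mul_one, Real.norm_eq_abs] at key
  simpa using key

end Helpers

theorem near_orthogonal_conditioning {n : ℕ} (hn : 0 < n)
    (Z δZ : Matrix (Fin n) (Fin n) ℝ)
    (horth : (Z + δZ)ᵀ * (Z + δZ) = 1)
    (β : ℝ) (hβ : β = 2 * specNorm δZ * specNorm Z + specNorm δZ ^ 2)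
    (hβ1 : β < 1) :
    (∀ k : Fin n, eigValsDesc (Zᵀ * Z) k ∈ Set.Icc (1 - β) (1 + β)) ∧
    IsUnit Z ∧
    singValsDesc Z ⟨0, hn⟩ / singValsDesc Z ⟨n - 1, Nat.sub_lt hn one_pos⟩ ≤
      Real.sqrt ((1 + β) / (1 - β)) := by
  have hHerm : (Zᵀ * Z).IsHermitian := Matrix.isHermitian_conjTranspose_mul_self Z
  have hβ0 : 0 ≤ β := by
    rw [hβ]
    have h1 := specNorm_nonneg' δZ
    have h2 := specNorm_nonneg' Z
    positivity
  -- the perturbation bound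
  have expand : Zᵀ * Z + (Zᵀ * δZ + δZᵀ * Z + δZᵀ * δZ) = 1 := by
    rw [← horth, transpose_add]; noncomm_ring
  have hE : Zᵀ * Z - 1 = -(Zᵀ * δZ + δZᵀ * Z + δZᵀ * δZ) := by
    rw [← expand]; abel
  have hEnorm : specNorm (Zᵀ * Z - 1) ≤ β := by
    rw [hE, specNorm_neg']
    have t1 : specNorm (Zᵀ * δZ) ≤ specNorm Z * specNorm δZ := by
      have := specNorm_mul_le' Zᵀ δZ
      rwa [specNorm_transpose'] at this
    have t2 : specNorm (δZᵀ * Z) ≤ specNorm δZ * specNorm Z := by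
      have := specNorm_mul_le' δZᵀ Z
      rwa [specNorm_transpose'] at this
    have t3 : specNorm (δZᵀ * δZ) ≤ specNorm δZ * specNorm δZ := by
      have := specNorm_mul_le' δZᵀ δZ
      rwa [specNorm_transpose'] at this
    have t4 := specNorm_add_le' (Zᵀ * δZ + δZᵀ * Z) (δZᵀ * δZ)
    have t5 := specNorm_add_le' (Zᵀ * δZ) (δZᵀ * Z)
    rw [hβ]; nlinarith [specNorm_nonneg' (Zᵀ * δZ + δZᵀ * Z)]
  have heig : ∀ i : Fin n, |hHerm.eigenvalues i - 1| ≤ β := by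
    intro i
    have hv1 : ‖hHerm.eigenvectorBasis i‖ = 1 := hHerm.eigenvectorBasis.orthonormal.1 i
    have hmv : (Zᵀ * Z - 1) *ᵥ ⇑(hHerm.eigenvectorBasis i)
        = (hHerm.eigenvalues i - 1) • ⇑(hHerm.eigenvectorBasis i) := by
      rw [Matrix.sub_mulVec, hHerm.mulVec_eigenvectorBasis, Matrix.one_mulVec,
        sub_smul, one_smul]
    exact le_trans (mulVec_eig_bound' _ _ hv1 _ hmv) hEnorm
  have heigIcc : ∀ i : Fin n, hHerm.eigenvalues i ∈ Set.Icc (1 - β) (1 + β) := by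
    intro i
    have := abs_le.mp (heig i)
    constructor <;> linarith [this.1, this.2]
  have hunfold : eigValsDesc (Zᵀ * Z)
      = fun k => (hHerm.eigenvalues ∘ Tuple.sort hHerm.eigenvalues) k.rev := by
    unfold eigValsDesc; rw [dif_pos hHerm]
  have part1 : ∀ k : Fin n, eigValsDesc (Zᵀ * Z) k ∈ Set.Icc (1 - β) (1 + β) := by
    intro k; rw [hunfold]; exact heigIcc _
  refine ⟨part1, ?_, ?_⟩
  · -- IsUnit Z
    have hdet : (Zᵀ * Z).det = ∏ i, hHerm.eigenvalues i := by
      simpa using hHerm.det_eq_prod_eigenvalues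
    have hpos : 0 < ∏ i, hHerm.eigenvalues i :=
      Finset.prod_pos fun i _ => lt_of_lt_of_le (by linarith) (heigIcc i).1
    have hdet2 : (Zᵀ * Z).det = Z.det ^ 2 := by
      rw [Matrix.det_mul, Matrix.det_transpose, sq]
    have hne : Z.det ≠ 0 := by
      intro h0
      rw [hdet2, h0] at hdet
      simp at hdet
      exact absurd hdet.symm (ne_of_gt hpos)
    exact (Matrix.isUnit_iff_isUnit_det Z).mpr (isUnit_iff_ne_zero.mpr hne)
  · -- condition number bound
    have h0 := part1 ⟨0, hn⟩
    have h1 := part1 ⟨n - 1, Nat.sub_lt hn one_pos⟩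
    have hb1 : (0:ℝ) < 1 - β := by linarith
    have hs0 : singValsDesc Z ⟨0, hn⟩ = Real.sqrt (eigValsDesc (Zᵀ * Z) ⟨0, hn⟩) := rfl
    have hs1 : singValsDesc Z ⟨n - 1, Nat.sub_lt hn one_pos⟩
        = Real.sqrt (eigValsDesc (Zᵀ * Z) ⟨n - 1, Nat.sub_lt hn one_pos⟩) := rfl
    rw [hs0, hs1, Real.sqrt_div (by linarith : (0:ℝ) ≤ 1 + β)]
    exact div_le_div₀ (Real.sqrt_nonneg _) (Real.sqrt_le_sqrt h0.2)
      (Real.sqrt_pos.mpr hb1) (Real.sqrt_le_sqrt h1.1)
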